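/- (Soundness of SL*.) For all 1-free star expressions r1, r2 ∈ StExp, if SL* ⊢ r1 = r2, then r1 and r2 are bisimilar as states of the syntactic chart (StExp, δ). -/

import Mathlib

/-- A chart over action alphabet `Act` with state space `X`: each state is assigned a
finite set of transitions, either `(a, none)` (i.e. `x →a ✓`) or `(a, some y)` (i.e. `x →a y`). -/
structure Chart (Act X : Type) where
  tr : X → Finset (Act × Option X)

/-- `x →a ✓` in the chart `C`. -/
def Chart.Halts {Act X : Type} (C : Chart Act X) (x : X) : Prop :=
  ∃ a : Act, (a, (none : Option X)) ∈ C.tr x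

/-- `x → y` (for some action) in the chart `C`. -/
def Chart.StepRel {Act X : Type} (C : Chart Act X) (x y : X) : Prop :=
  ∃ a : Act, (a, some y) ∈ C.tr x

/-- `R` is a bisimulation between the charts `C` and `D`. -/
def IsBisim {Act X Y : Type} (C : Chart Act X) (D : Chart Act Y) (R : X → Y → Prop) : Prop :=
  ∀ x y, R x y → ∀ a : Act,
    (((a, (none : Option X)) ∈ C.tr x) ↔ ((a, (none : Option Y)) ∈ D.tr y)) ∧
    (∀ x', (a, some x') ∈ C.tr x → ∃ y', (a, some y') ∈ D.tr y ∧ R x' y') ∧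
    (∀ y', (a, some y') ∈ D.tr y → ∃ x', (a, some x') ∈ C.tr x ∧ R x' y')

/-- States `x` of `C` and `y` of `D` are bisimilar. -/
def Bisimilar {Act X Y : Type} (C : Chart Act X) (D : Chart Act Y) (x : X) (y : Y) : Prop :=
  ∃ R, IsBisim C D R ∧ R x y

/-- A chart homomorphism is a function whose graph is a bisimulation. -/
def IsChartHom {Act X Y : Type} (C : Chart Act X) (D : Chart Act Y) (h : X → Y) : Prop :=
  IsBisim C D (fun x y => h x = y)

/-- 1-free star expressions over the alphabet `Act`. -/
inductive StExp (Act : Type) : Type where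
  | zero : StExp Act
  | act : Act → StExp Act
  | add : StExp Act → StExp Act → StExp Act
  | mul : StExp Act → StExp Act → StExp Act
  | star : StExp Act → StExp Act → StExp Act
deriving DecidableEq

/-- Continuation after a transition of the left operand: `✓` continues as `s`,
and a state `t` continues as `t·s`. -/
def StExp.seqAfter {Act : Type} (s : StExp Act) : Option (StExp Act) → StExp Act
  | none => s
  | some t => t.mul s

/-- The transition function of the syntactic chart, following Antimirov-style rules. -/
def StExp.tr {Act : Type} [DecidableEq Act] : StExp Act → Finset (Act × Option (StExp Act))
  | .zero => ∅
  | .act a => {(a, none)}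
  | .add r s => r.tr ∪ s.tr
  | .mul r s => r.tr.image (fun p => (p.1, some (StExp.seqAfter s p.2)))
  | .star r s =>
      (r.tr.image (fun p => (p.1, some (StExp.seqAfter (StExp.star r s) p.2)))) ∪ s.tr

/-- The syntactic chart `(StExp, δ)`. -/
def synChart (Act : Type) [DecidableEq Act] : Chart Act (StExp Act) := ⟨StExp.tr⟩

/-- Derivability `SL* ⊢ r = s` from Grabmayer and Fokkink's axioms together with
the laws of equational logic. -/
inductive SLEq {Act : Type} : StExp Act → StExp Act → Prop where
  | add_comm (x y : StExp Act) : SLEq (x.add y) (y.add x)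
  | add_assoc (x y z : StExp Act) : SLEq ((x.add y).add z) (x.add (y.add z))
  | add_idem (x : StExp Act) : SLEq (x.add x) x
  | add_zero (x : StExp Act) : SLEq (x.add .zero) x
  | right_distrib (x y z : StExp Act) : SLEq ((x.add y).mul z) ((x.mul z).add (y.mul z))
  | mul_assoc (x y z : StExp Act) : SLEq ((x.mul y).mul z) (x.mul (y.mul z))
  | zero_mul (x : StExp Act) : SLEq (StExp.zero.mul x) .zero
  | star_unfold (x y : StExp Act) : SLEq (x.star y) ((x.mul (x.star y)).add y)
  | fixpoint {x y z : StExp Act} : SLEq x ((y.mul x).add z) → SLEq x (y.star z)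
  | refl (x : StExp Act) : SLEq x x
  | symm {x y : StExp Act} : SLEq x y → SLEq y x
  | trans {x y z : StExp Act} : SLEq x y → SLEq y z → SLEq x z
  | add_congr {x x' y y' : StExp Act} : SLEq x x' → SLEq y y' → SLEq (x.add y) (x'.add y')
  | mul_congr {x x' y y' : StExp Act} : SLEq x x' → SLEq y y' → SLEq (x.mul y) (x'.mul y')
  | star_congr {x x' y y' : StExp Act} : SLEq x x' → SLEq y y' → SLEq (x.star y) (x'.star y')

section Soundness

variable {Act : Type} [DecidableEq Act]

/-- Bisimilarity on the syntactic chart. -/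
def Bis (r s : StExp Act) : Prop := Bisimilar (synChart Act) (synChart Act) r s

@[simp] lemma synChart_tr (r : StExp Act) : (synChart Act).tr r = r.tr := rfl

lemma bis_refl (r : StExp Act) : Bis r r :=
  ⟨Eq, fun x y hxy a => by
    subst hxy
    exact ⟨Iff.rfl, fun x' h => ⟨x', h, rfl⟩, fun y' h => ⟨y', h, rfl⟩⟩, rfl⟩

lemma bis_symm {r s : StExp Act} (h : Bis r s) : Bis s r := by
  obtain ⟨R, hR, hrs⟩ := h
  refine ⟨fun a b => R b a, fun x y hxy a => ?_, hrs⟩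
  obtain ⟨h1, h2, h3⟩ := hR y x hxy a
  exact ⟨h1.symm, h3, h2⟩

lemma bis_trans {r s t : StExp Act} (h1 : Bis r s) (h2 : Bis s t) : Bis r t := by
  obtain ⟨R, hR, hrs⟩ := h1
  obtain ⟨S, hS, hst⟩ := h2
  refine ⟨fun a c => ∃ b, R a b ∧ S b c, ?_, ⟨s, hrs, hst⟩⟩
  rintro x z ⟨y, hxy, hyz⟩ a
  obtain ⟨i1, f1, b1⟩ := hR x y hxy a
  obtain ⟨i2, f2, b2⟩ := hS y z hyz a
  refine ⟨i1.trans i2, fun x' hx' => ?_, fun z' hz' => ?_⟩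
  · obtain ⟨y', hy', hRy⟩ := f1 x' hx'
    obtain ⟨z', hz', hSz⟩ := f2 y' hy'
    exact ⟨z', hz', y', hRy, hSz⟩
  · obtain ⟨y', hy', hSy⟩ := b2 z' hz'
    obtain ⟨x', hx', hRx⟩ := b1 y' hy'
    exact ⟨x', hx', y', hRx, hSy⟩

lemma bis_isBisim : IsBisim (synChart Act) (synChart Act) Bis := by
  rintro x y ⟨R, hR, hxy⟩ a
  obtain ⟨i, f, b⟩ := hR x y hxy a
  exact ⟨i, fun x' h => (f x' h).imp (fun y' ⟨h1, h2⟩ => ⟨h1, R, hR, h2⟩),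
         fun y' h => (b y' h).imp (fun x' ⟨h1, h2⟩ => ⟨h1, R, hR, h2⟩)⟩

lemma bis_of_tr_eq {r s : StExp Act} (h : r.tr = s.tr) : Bis r s := by
  refine ⟨fun u v => u = v ∨ (u = r ∧ v = s), ?_, Or.inr ⟨rfl, rfl⟩⟩
  rintro x y (rfl | ⟨rfl, rfl⟩) a
  · exact ⟨Iff.rfl, fun x' h => ⟨x', h, Or.inl rfl⟩, fun y' h => ⟨y', h, Or.inl rfl⟩⟩
  · refine ⟨by simp [h], fun x' hx' => ⟨x', by simpa [h] using hx', Or.inl rfl⟩,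
      fun y' hy' => ⟨y', by simpa [h] using hy', Or.inl rfl⟩⟩

lemma mem_tr_mul {r s : StExp Act} {a : Act} {o : Option (StExp Act)} :
    (a, o) ∈ (r.mul s).tr ↔ ∃ o', (a, o') ∈ r.tr ∧ o = some (StExp.seqAfter s o') := by
  simp only [StExp.tr, Finset.mem_image, Prod.mk.injEq, Prod.exists]
  constructor
  · rintro ⟨a', o', h, rfl, rfl⟩; exact ⟨o', h, rfl⟩
  · rintro ⟨o', h, rfl⟩; exact ⟨a, o', h, rfl, rfl⟩

lemma mem_tr_star {r s : StExp Act} {a : Act} {o : Option (StExp Act)} :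
    (a, o) ∈ (r.star s).tr ↔
      (∃ o', (a, o') ∈ r.tr ∧ o = some (StExp.seqAfter (r.star s) o')) ∨ (a, o) ∈ s.tr := by
  simp only [StExp.tr, Finset.mem_union, Finset.mem_image, Prod.mk.injEq, Prod.exists]
  constructor
  · rintro (⟨a', o', h, rfl, rfl⟩ | h)
    · exact Or.inl ⟨o', h, rfl⟩
    · exact Or.inr h
  · rintro (⟨o', h, rfl⟩ | h)
    · exact Or.inl ⟨a, o', h, rfl, rfl⟩
    · exact Or.inr h

lemma none_not_mem_tr_mul {r s : StExp Act} {a : Act} :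
    (a, (none : Option (StExp Act))) ∉ (r.mul s).tr := by
  intro h
  obtain ⟨o', -, h2⟩ := mem_tr_mul.1 h
  cases h2

lemma none_mem_tr_star {r s : StExp Act} {a : Act} :
    ((a, (none : Option (StExp Act))) ∈ (r.star s).tr) ↔ (a, (none : Option (StExp Act))) ∈ s.tr := by
  rw [mem_tr_star]
  constructor
  · rintro (⟨o', -, h⟩ | h)
    · exact absurd h (by simp)
    · exact h
  · exact Or.inr

/-- `((x·y)·z, x·(y·z))` together with equality is a bisimulation. -/
lemma bis_mul_assoc (x y z : StExp Act) : Bis ((x.mul y).mul z) (x.mul (y.mul z)) := by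
  refine ⟨fun u v => u = v ∨ ∃ p q w, u = (p.mul q).mul w ∧ v = p.mul (q.mul w), ?_,
    Or.inr ⟨x, y, z, rfl, rfl⟩⟩
  rintro u v (rfl | ⟨p, q, w, rfl, rfl⟩) a
  · exact ⟨Iff.rfl, fun x' h => ⟨x', h, Or.inl rfl⟩, fun y' h => ⟨y', h, Or.inl rfl⟩⟩
  refine ⟨iff_of_false none_not_mem_tr_mul none_not_mem_tr_mul,
    fun u' hu' => ?_, fun v' hv' => ?_⟩
  · simp only [synChart_tr] at hu' ⊢
    obtain ⟨o1, h1, ho1⟩ := mem_tr_mul.1 hu'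
    obtain ⟨o2, h2, ho2⟩ := mem_tr_mul.1 h1
    subst ho2
    cases o2 with
    | none =>
        refine ⟨q.mul w, mem_tr_mul.2 ⟨none, h2, rfl⟩, ?_⟩
        simp only [StExp.seqAfter] at ho1
        cases ho1
        exact Or.inl rfl
    | some t =>
        refine ⟨t.mul (q.mul w), mem_tr_mul.2 ⟨some t, h2, rfl⟩, ?_⟩
        simp only [StExp.seqAfter] at ho1
        cases ho1
        exact Or.inr ⟨t, q, w, rfl, rfl⟩
  · simp only [synChart_tr] at hv' ⊢
    obtain ⟨o2, h2, ho2⟩ := mem_tr_mul.1 hv'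
    cases o2 with
    | none =>
        refine ⟨q.mul w, mem_tr_mul.2 ⟨some q, mem_tr_mul.2 ⟨none, h2, rfl⟩, rfl⟩, ?_⟩
        simp only [StExp.seqAfter] at ho2
        cases ho2
        exact Or.inl rfl
    | some t =>
        refine ⟨(t.mul q).mul w,
          mem_tr_mul.2 ⟨some (t.mul q), mem_tr_mul.2 ⟨some t, h2, rfl⟩, rfl⟩, ?_⟩
        simp only [StExp.seqAfter] at ho2
        cases ho2
        exact Or.inr ⟨t, q, w, rfl, rfl⟩

lemma bis_add_congr {x x' y y' : StExp Act} (hx : Bis x x') (hy : Bis y y') :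
    Bis (x.add y) (x'.add y') := by
  refine ⟨fun u v => Bis u v ∨ (u = x.add y ∧ v = x'.add y'), ?_, Or.inr ⟨rfl, rfl⟩⟩
  rintro u v (huv | ⟨rfl, rfl⟩) a
  · obtain ⟨i, f, b⟩ := bis_isBisim u v huv a
    exact ⟨i, fun u' h => (f u' h).imp fun v' ⟨h1, h2⟩ => ⟨h1, Or.inl h2⟩,
      fun v' h => (b v' h).imp fun u' ⟨h1, h2⟩ => ⟨h1, Or.inl h2⟩⟩
  obtain ⟨ix, fx, bx⟩ := bis_isBisim x x' hx a
  obtain ⟨iy, fy, by'⟩ := bis_isBisim y y' hy a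
  simp only [synChart_tr, StExp.tr, Finset.mem_union] at *
  refine ⟨or_congr ix iy, fun u' hu' => ?_, fun v' hv' => ?_⟩
  · rcases hu' with h | h
    · obtain ⟨v', h1, h2⟩ := fx u' h; exact ⟨v', Or.inl h1, Or.inl h2⟩
    · obtain ⟨v', h1, h2⟩ := fy u' h; exact ⟨v', Or.inr h1, Or.inl h2⟩
  · rcases hv' with h | h
    · obtain ⟨u', h1, h2⟩ := bx v' h; exact ⟨u', Or.inl h1, Or.inl h2⟩
    · obtain ⟨u', h1, h2⟩ := by' v' h; exact ⟨u', Or.inr h1, Or.inl h2⟩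

lemma bis_mul_congr {x x' y y' : StExp Act} (hx : Bis x x') (hy : Bis y y') :
    Bis (x.mul y) (x'.mul y') := by
  refine ⟨fun u v => Bis u v ∨ ∃ s s', u = s.mul y ∧ v = s'.mul y' ∧ Bis s s', ?_,
    Or.inr ⟨x, x', rfl, rfl, hx⟩⟩
  rintro u v (huv | ⟨s, s', rfl, rfl, hss⟩) a
  · obtain ⟨i, f, b⟩ := bis_isBisim u v huv a
    exact ⟨i, fun u' h => (f u' h).imp fun v' ⟨h1, h2⟩ => ⟨h1, Or.inl h2⟩,
      fun v' h => (b v' h).imp fun u' ⟨h1, h2⟩ => ⟨h1, Or.inl h2⟩⟩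
  obtain ⟨i, f, b⟩ := bis_isBisim s s' hss a
  simp only [synChart_tr] at *
  refine ⟨iff_of_false none_not_mem_tr_mul none_not_mem_tr_mul,
    fun u' hu' => ?_, fun v' hv' => ?_⟩
  · obtain ⟨o, ho, he⟩ := mem_tr_mul.1 hu'
    cases o with
    | none =>
        simp only [StExp.seqAfter] at he; cases he
        exact ⟨y', mem_tr_mul.2 ⟨none, i.1 ho, rfl⟩, Or.inl hy⟩
    | some t =>
        simp only [StExp.seqAfter] at he; cases he
        obtain ⟨t', ht', htt⟩ := f t ho
        exact ⟨t'.mul y', mem_tr_mul.2 ⟨some t', ht', rfl⟩,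
          Or.inr ⟨t, t', rfl, rfl, htt⟩⟩
  · obtain ⟨o, ho, he⟩ := mem_tr_mul.1 hv'
    cases o with
    | none =>
        simp only [StExp.seqAfter] at he; cases he
        exact ⟨y, mem_tr_mul.2 ⟨none, i.2 ho, rfl⟩, Or.inl hy⟩
    | some t' =>
        simp only [StExp.seqAfter] at he; cases he
        obtain ⟨t, ht, htt⟩ := b t' ho
        exact ⟨t.mul y, mem_tr_mul.2 ⟨some t, ht, rfl⟩,
          Or.inr ⟨t, t', rfl, rfl, htt⟩⟩

lemma bis_star_congr {x x' y y' : StExp Act} (hx : Bis x x') (hy : Bis y y') :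
    Bis (x.star y) (x'.star y') := by
  refine ⟨fun u v => Bis u v ∨ (u = x.star y ∧ v = x'.star y') ∨
      ∃ s s', u = s.mul (x.star y) ∧ v = s'.mul (x'.star y') ∧ Bis s s', ?_,
    Or.inr (Or.inl ⟨rfl, rfl⟩)⟩
  rintro u v (huv | ⟨rfl, rfl⟩ | ⟨s, s', rfl, rfl, hss⟩) a
  · obtain ⟨i, f, b⟩ := bis_isBisim u v huv a
    exact ⟨i, fun u' h => (f u' h).imp fun v' ⟨h1, h2⟩ => ⟨h1, Or.inl h2⟩,
      fun v' h => (b v' h).imp fun u' ⟨h1, h2⟩ => ⟨h1, Or.inl h2⟩⟩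
  · obtain ⟨ix, fx, bx⟩ := bis_isBisim x x' hx a
    obtain ⟨iy, fy, by'⟩ := bis_isBisim y y' hy a
    simp only [synChart_tr] at *
    refine ⟨by rw [none_mem_tr_star, none_mem_tr_star]; exact iy, fun u' hu' => ?_,
      fun v' hv' => ?_⟩
    · rcases mem_tr_star.1 hu' with ⟨o, ho, he⟩ | h
      · cases o with
        | none =>
            simp only [StExp.seqAfter] at he; cases he
            refine ⟨x'.star y', mem_tr_star.2 (Or.inl ⟨none, ix.1 ho, rfl⟩), ?_⟩
            exact Or.inr (Or.inl ⟨rfl, rfl⟩)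
        | some t =>
            simp only [StExp.seqAfter] at he; cases he
            obtain ⟨t', ht', htt⟩ := fx t ho
            refine ⟨t'.mul (x'.star y'), mem_tr_star.2 (Or.inl ⟨some t', ht', rfl⟩), ?_⟩
            exact Or.inr (Or.inr ⟨t, t', rfl, rfl, htt⟩)
      · obtain ⟨v', hv', hvv⟩ := fy u' h
        exact ⟨v', mem_tr_star.2 (Or.inr hv'), Or.inl hvv⟩
    · rcases mem_tr_star.1 hv' with ⟨o, ho, he⟩ | h
      · cases o with
        | none =>
            simp only [StExp.seqAfter] at he; cases he
            refine ⟨x.star y, mem_tr_star.2 (Or.inl ⟨none, ix.2 ho, rfl⟩), ?_⟩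
            exact Or.inr (Or.inl ⟨rfl, rfl⟩)
        | some t' =>
            simp only [StExp.seqAfter] at he; cases he
            obtain ⟨t, ht, htt⟩ := bx t' ho
            refine ⟨t.mul (x.star y), mem_tr_star.2 (Or.inl ⟨some t, ht, rfl⟩), ?_⟩
            exact Or.inr (Or.inr ⟨t, t', rfl, rfl, htt⟩)
      · obtain ⟨u', hu', huu⟩ := by' v' h
        exact ⟨u', mem_tr_star.2 (Or.inr hu'), Or.inl huu⟩
  · obtain ⟨i, f, b⟩ := bis_isBisim s s' hss a
    simp only [synChart_tr] at *
    refine ⟨iff_of_false none_not_mem_tr_mul none_not_mem_tr_mul,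
      fun u' hu' => ?_, fun v' hv' => ?_⟩
    · obtain ⟨o, ho, he⟩ := mem_tr_mul.1 hu'
      cases o with
      | none =>
          simp only [StExp.seqAfter] at he; cases he
          exact ⟨x'.star y', mem_tr_mul.2 ⟨none, i.1 ho, rfl⟩,
            Or.inr (Or.inl ⟨rfl, rfl⟩)⟩
      | some t =>
          simp only [StExp.seqAfter] at he; cases he
          obtain ⟨t', ht', htt⟩ := f t ho
          exact ⟨t'.mul (x'.star y'), mem_tr_mul.2 ⟨some t', ht', rfl⟩,
            Or.inr (Or.inr ⟨t, t', rfl, rfl, htt⟩)⟩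
    · obtain ⟨o, ho, he⟩ := mem_tr_mul.1 hv'
      cases o with
      | none =>
          simp only [StExp.seqAfter] at he; cases he
          exact ⟨x.star y, mem_tr_mul.2 ⟨none, i.2 ho, rfl⟩,
            Or.inr (Or.inl ⟨rfl, rfl⟩)⟩
      | some t' =>
          simp only [StExp.seqAfter] at he; cases he
          obtain ⟨t, ht, htt⟩ := b t' ho
          exact ⟨t.mul (x.star y), mem_tr_mul.2 ⟨some t, ht, rfl⟩,
            Or.inr (Or.inr ⟨t, t', rfl, rfl, htt⟩)⟩

lemma bis_fixpoint {x y z : StExp Act} (hx : Bis x ((y.mul x).add z)) :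
    Bis x (y.star z) := by
  refine ⟨fun u v => Bis u v ∨ (Bis u x ∧ v = y.star z) ∨
      ∃ s : StExp Act, Bis u (s.mul x) ∧ v = s.mul (y.star z), ?_,
    Or.inr (Or.inl ⟨bis_refl x, rfl⟩)⟩
  rintro u v (huv | ⟨hux, rfl⟩ | ⟨s, hus, rfl⟩) a
  · obtain ⟨i, f, b⟩ := bis_isBisim u v huv a
    exact ⟨i, fun u' h => (f u' h).imp fun v' ⟨h1, h2⟩ => ⟨h1, Or.inl h2⟩,
      fun v' h => (b v' h).imp fun u' ⟨h1, h2⟩ => ⟨h1, Or.inl h2⟩⟩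
  · obtain ⟨i, f, b⟩ := bis_isBisim u ((y.mul x).add z) (bis_trans hux hx) a
    simp only [synChart_tr] at *
    refine ⟨?_, fun u' hu' => ?_, fun v' hv' => ?_⟩
    · rw [i, none_mem_tr_star]
      show _ ∈ (y.mul x).tr ∪ z.tr ↔ _
      rw [Finset.mem_union]
      exact or_iff_right none_not_mem_tr_mul
    · obtain ⟨w, hw, huw⟩ := f u' hu'
      rw [show ((y.mul x).add z).tr = (y.mul x).tr ∪ z.tr from rfl, Finset.mem_union] at hw
      rcases hw with hw | hw
      · obtain ⟨o, ho, he⟩ := mem_tr_mul.1 hw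
        cases o with
        | none =>
            simp only [StExp.seqAfter] at he; cases he
            exact ⟨y.star z, mem_tr_star.2 (Or.inl ⟨none, ho, rfl⟩),
              Or.inr (Or.inl ⟨huw, rfl⟩)⟩
        | some t =>
            simp only [StExp.seqAfter] at he; cases he
            exact ⟨t.mul (y.star z), mem_tr_star.2 (Or.inl ⟨some t, ho, rfl⟩),
              Or.inr (Or.inr ⟨t, huw, rfl⟩)⟩
      · exact ⟨w, mem_tr_star.2 (Or.inr hw), Or.inl huw⟩
    · rcases mem_tr_star.1 hv' with ⟨o, ho, he⟩ | h
      · cases o with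
        | none =>
            simp only [StExp.seqAfter] at he; cases he
            have : (a, some x) ∈ ((y.mul x).add z).tr :=
              Finset.mem_union_left _ (mem_tr_mul.2 ⟨none, ho, rfl⟩)
            obtain ⟨u', hu', huu⟩ := b x this
            exact ⟨u', hu', Or.inr (Or.inl ⟨huu, rfl⟩)⟩
        | some t =>
            simp only [StExp.seqAfter] at he; cases he
            have : (a, some (t.mul x)) ∈ ((y.mul x).add z).tr :=
              Finset.mem_union_left _ (mem_tr_mul.2 ⟨some t, ho, rfl⟩)
            obtain ⟨u', hu', huu⟩ := b _ this
            exact ⟨u', hu', Or.inr (Or.inr ⟨t, huu, rfl⟩)⟩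
      · obtain ⟨u', hu', huu⟩ := b v' (Finset.mem_union_right _ h)
        exact ⟨u', hu', Or.inl huu⟩
  · obtain ⟨i, f, b⟩ := bis_isBisim u (s.mul x) hus a
    simp only [synChart_tr] at *
    refine ⟨by rw [i]; exact iff_of_false none_not_mem_tr_mul none_not_mem_tr_mul,
      fun u' hu' => ?_, fun v' hv' => ?_⟩
    · obtain ⟨w, hw, huw⟩ := f u' hu'
      obtain ⟨o, ho, he⟩ := mem_tr_mul.1 hw
      cases o with
      | none =>
          simp only [StExp.seqAfter] at he; cases he
          exact ⟨y.star z, mem_tr_mul.2 ⟨none, ho, rfl⟩, Or.inr (Or.inl ⟨huw, rfl⟩)⟩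
      | some t =>
          simp only [StExp.seqAfter] at he; cases he
          exact ⟨t.mul (y.star z), mem_tr_mul.2 ⟨some t, ho, rfl⟩,
            Or.inr (Or.inr ⟨t, huw, rfl⟩)⟩
    · obtain ⟨o, ho, he⟩ := mem_tr_mul.1 hv'
      cases o with
      | none =>
          simp only [StExp.seqAfter] at he; cases he
          obtain ⟨u', hu', huu⟩ := b x (mem_tr_mul.2 ⟨none, ho, rfl⟩)
          exact ⟨u', hu', Or.inr (Or.inl ⟨huu, rfl⟩)⟩
      | some t =>
          simp only [StExp.seqAfter] at he; cases he
          obtain ⟨u', hu', huu⟩ := b (t.mul x) (mem_tr_mul.2 ⟨some t, ho, rfl⟩)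
          exact ⟨u', hu', Or.inr (Or.inr ⟨t, huu, rfl⟩)⟩

/-- Soundness of `SL*`: provably equivalent 1-free star expressions are bisimilar
as states of the syntactic chart. -/
theorem soundness_SLstar {Act : Type} [DecidableEq Act] (r1 r2 : StExp Act)
    (h : SLEq r1 r2) : Bisimilar (synChart Act) (synChart Act) r1 r2 := by
  induction h with
  | add_comm x y => exact bis_of_tr_eq (by simp [StExp.tr, Finset.union_comm])
  | add_assoc x y z => exact bis_of_tr_eq (by simp [StExp.tr, Finset.union_assoc])
  | add_idem x => exact bis_of_tr_eq (by simp [StExp.tr])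
  | add_zero x => exact bis_of_tr_eq (by simp [StExp.tr])
  | right_distrib x y z => exact bis_of_tr_eq (by simp [StExp.tr, Finset.image_union])
  | zero_mul x => exact bis_of_tr_eq (by simp [StExp.tr])
  | star_unfold x y => exact bis_of_tr_eq rfl
  | mul_assoc x y z => exact bis_mul_assoc x y z
  | fixpoint _ ih => exact bis_fixpoint ih
  | refl x => exact bis_refl x
  | symm _ ih => exact bis_symm ih
  | trans _ _ ih1 ih2 => exact bis_trans ih1 ih2
  | add_congr _ _ ih1 ih2 => exact bis_add_congr ih1 ih2
  | mul_congr _ _ ih1 ih2 => exact bis_mul_congr ih1 ih2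
  | star_congr _ _ ih1 ih2 => exact bis_star_congr ih1 ih2
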